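/- Let σ > 0, t > 0, μ ∈ ℝ, and K, K' > 0. Then ∫_ℝ max(e^y − K', 0) · (2πσ²t)^{−1/2} exp(−(y − (log K + μt))²/(2σ²t)) dy = K e^{(μ + σ²/2)t} 𝒩((log(K/K') + (μ + σ²)t)/(σ√t)) − K' 𝒩((log(K/K') + μt)/(σ√t)). -/

import Mathlib

open MeasureTheory Set

/-- The standard normal cumulative distribution function. -/
noncomputable def stdNormalCdf (x : ℝ) : ℝ :=
  ∫ u in Set.Iio x, (Real.sqrt (2 * Real.pi))⁻¹ * Real.exp (-u ^ 2 / 2)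

lemma my_integral_comp_add_right_Ioi (f : ℝ → ℝ) (a c : ℝ) :
    ∫ x in Set.Ioi a, f (x + c) = ∫ x in Set.Ioi (a + c), f x := by
  have A : MeasurableEmbedding fun x : ℝ => x + c :=
    (Homeomorph.addRight c).isClosedEmbedding.measurableEmbedding
  have h := A.setIntegral_map (μ := volume) f (Set.Ioi (a + c))
  rw [map_add_right_eq_self volume c] at h
  rw [h, preimage_add_const_Ioi, add_sub_cancel_right]

lemma gauss_tail (s m c : ℝ) (hs : 0 < s) :
    ∫ y in Set.Ioi c, (Real.sqrt (2 * Real.pi) * s)⁻¹ * Real.exp (-((y - m) / s) ^ 2 / 2)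
      = stdNormalCdf ((m - c) / s) := by
  have h1 : ∫ y in Set.Ioi c, (Real.sqrt (2 * Real.pi) * s)⁻¹ * Real.exp (-((y - m) / s) ^ 2 / 2)
      = ∫ y in Set.Ioi (c - m), (Real.sqrt (2 * Real.pi) * s)⁻¹ * Real.exp (-(y / s) ^ 2 / 2) := by
    have := my_integral_comp_add_right_Ioi
      (fun y => (Real.sqrt (2 * Real.pi) * s)⁻¹ * Real.exp (-(y / s) ^ 2 / 2)) c (-m)
    simpa [sub_eq_add_neg] using this
  rw [h1]
  have h2 : ∫ y in Set.Ioi (c - m), (Real.sqrt (2 * Real.pi) * s)⁻¹ * Real.exp (-(y / s) ^ 2 / 2)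
      = s • ∫ y in Set.Ioi ((c - m) / s),
          (Real.sqrt (2 * Real.pi) * s)⁻¹ * Real.exp (-y ^ 2 / 2) := by
    have h := integral_comp_mul_left_Ioi
      (fun y => (Real.sqrt (2 * Real.pi) * s)⁻¹ * Real.exp (-y ^ 2 / 2)) (c - m)
      (inv_pos.mpr hs)
    simp only [inv_inv] at h
    rw [show (c - m) / s = s⁻¹ * (c - m) by rw [div_eq_inv_mul], ← h]
    refine setIntegral_congr_fun measurableSet_Ioi fun y _ => ?_
    rw [inv_mul_eq_div s y]
  rw [h2]
  have h3 : s • ∫ y in Set.Ioi ((c - m) / s),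
        (Real.sqrt (2 * Real.pi) * s)⁻¹ * Real.exp (-y ^ 2 / 2)
      = ∫ y in Set.Ioi ((c - m) / s), (Real.sqrt (2 * Real.pi))⁻¹ * Real.exp (-y ^ 2 / 2) := by
    rw [smul_eq_mul, ← integral_const_mul]
    refine setIntegral_congr_fun measurableSet_Ioi fun y _ => ?_
    rw [mul_inv, ← mul_assoc, ← mul_assoc, mul_comm s, mul_assoc _ s, mul_inv_cancel₀ hs.ne',
      mul_one]
  rw [h3]
  have h4 : ∫ y in Set.Ioi ((c - m) / s), (Real.sqrt (2 * Real.pi))⁻¹ * Real.exp (-y ^ 2 / 2)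
      = ∫ y in Set.Iic (-((c - m) / s)),
          (Real.sqrt (2 * Real.pi))⁻¹ * Real.exp (-y ^ 2 / 2) := by
    rw [← integral_comp_neg_Ioi]
    refine setIntegral_congr_fun measurableSet_Ioi fun y _ => ?_
    rw [neg_sq]
  rw [h4, integral_Iic_eq_integral_Iio]
  have : -((c - m) / s) = (m - c) / s := by ring
  rw [this, stdNormalCdf]

/-- For `σ, t, K, K' > 0` and `μ ∈ ℝ`,
`∫ max(e^y − K',0) (2πσ²t)^{−1/2} exp(−(y − (log K + μt))²/(2σ²t)) dy
  = K e^{(μ+σ²/2)t} 𝒩((log(K/K') + (μ+σ²)t)/(σ√t)) − K' 𝒩((log(K/K') + μt)/(σ√t))`. -/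
theorem stmt_13 (σ t μ K K' : ℝ) (hσ : 0 < σ) (ht : 0 < t) (hK : 0 < K) (hK' : 0 < K') :
    (∫ y : ℝ, max (Real.exp y - K') 0
        * ((Real.sqrt (2 * Real.pi * σ ^ 2 * t))⁻¹
          * Real.exp (-(y - (Real.log K + μ * t)) ^ 2 / (2 * σ ^ 2 * t))))
      = K * Real.exp ((μ + σ ^ 2 / 2) * t)
          * stdNormalCdf ((Real.log (K / K') + (μ + σ ^ 2) * t) / (σ * Real.sqrt t))
        - K' * stdNormalCdf ((Real.log (K / K') + μ * t) / (σ * Real.sqrt t)) := by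
  set s : ℝ := σ * Real.sqrt t with hs_def
  have hs : 0 < s := mul_pos hσ (Real.sqrt_pos.mpr ht)
  have hs2 : s ^ 2 = σ ^ 2 * t := by
    rw [hs_def, mul_pow, Real.sq_sqrt ht.le]
  set m : ℝ := Real.log K + μ * t with hm_def
  set c : ℝ := Real.log K' with hc_def
  set pdf : ℝ → ℝ :=
    fun y => (Real.sqrt (2 * Real.pi) * s)⁻¹ * Real.exp (-((y - m) / s) ^ 2 / 2) with hpdf_def
  -- rewrite the integrand in terms of pdf
  have hnorm : Real.sqrt (2 * Real.pi * σ ^ 2 * t) = Real.sqrt (2 * Real.pi) * s := by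
    rw [show 2 * Real.pi * σ ^ 2 * t = (2 * Real.pi) * s ^ 2 by rw [hs2]; ring,
      Real.sqrt_mul (by positivity), Real.sqrt_sq hs.le]
  have hexpo : ∀ y : ℝ, -(y - m) ^ 2 / (2 * σ ^ 2 * t) = -((y - m) / s) ^ 2 / 2 := by
    intro y
    rw [div_pow, show 2 * σ ^ 2 * t = 2 * s ^ 2 by rw [hs2]; ring]
    field_simp
  have hrw : (∫ y : ℝ, max (Real.exp y - K') 0
        * ((Real.sqrt (2 * Real.pi * σ ^ 2 * t))⁻¹
          * Real.exp (-(y - (Real.log K + μ * t)) ^ 2 / (2 * σ ^ 2 * t))))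
      = ∫ y : ℝ, max (Real.exp y - K') 0 * pdf y := by
    congr 1; ext y
    rw [hnorm, hexpo y]
  rw [hrw]
  -- indicator rewriting
  have hind : ∀ y : ℝ, max (Real.exp y - K') 0 * pdf y
      = Set.indicator (Set.Ioi c) (fun y => (Real.exp y - K') * pdf y) y := by
    intro y
    by_cases hy : y ∈ Set.Ioi c
    · rw [Set.indicator_of_mem hy]
      congr 1
      apply max_eq_left
      have : K' < Real.exp y := by
        calc K' = Real.exp (Real.log K') := (Real.exp_log hK').symm
        _ < Real.exp y := Real.exp_lt_exp.mpr hy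
      linarith
    · rw [Set.indicator_of_notMem hy]
      have hy' : y ≤ c := not_lt.mp hy
      have : Real.exp y ≤ K' := by
        calc Real.exp y ≤ Real.exp c := Real.exp_le_exp.mpr hy'
        _ = K' := Real.exp_log hK'
      rw [max_eq_right (by linarith), zero_mul]
  have hrw2 : (∫ y : ℝ, max (Real.exp y - K') 0 * pdf y)
      = ∫ y in Set.Ioi c, (Real.exp y - K') * pdf y := by
    simp_rw [hind]
    rw [integral_indicator measurableSet_Ioi]
  rw [hrw2]
  -- the shifted gaussian identity
  have hE : K * Real.exp ((μ + σ ^ 2 / 2) * t) = Real.exp (m + s ^ 2 / 2) := by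
    rw [← Real.exp_log hK, ← Real.exp_add, hm_def, hs2]
    ring_nf
  have hshift : ∀ y : ℝ, Real.exp y * pdf y
      = Real.exp (m + s ^ 2 / 2)
        * ((Real.sqrt (2 * Real.pi) * s)⁻¹ * Real.exp (-((y - (m + s ^ 2)) / s) ^ 2 / 2)) := by
    intro y
    rw [hpdf_def]
    have : Real.exp y * ((Real.sqrt (2 * Real.pi) * s)⁻¹ * Real.exp (-((y - m) / s) ^ 2 / 2))
        = (Real.sqrt (2 * Real.pi) * s)⁻¹ * (Real.exp y * Real.exp (-((y - m) / s) ^ 2 / 2)) := by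
      ring
    rw [this, ← Real.exp_add,
      show Real.exp (m + s ^ 2 / 2)
          * ((Real.sqrt (2 * Real.pi) * s)⁻¹ * Real.exp (-((y - (m + s ^ 2)) / s) ^ 2 / 2))
        = (Real.sqrt (2 * Real.pi) * s)⁻¹
          * (Real.exp (m + s ^ 2 / 2) * Real.exp (-((y - (m + s ^ 2)) / s) ^ 2 / 2)) by ring,
      ← Real.exp_add]
    congr 1
    have hs' : s ≠ 0 := hs.ne'
    field_simp
    ring
  -- integrability
  have hb : (0 : ℝ) < (2 * s ^ 2)⁻¹ := by positivity
  have gauss_int : ∀ m' : ℝ, IntegrableOn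
      (fun y => (Real.sqrt (2 * Real.pi) * s)⁻¹ * Real.exp (-((y - m') / s) ^ 2 / 2))
      (Set.Ioi c) volume := by
    intro m'
    have h0 : Integrable (fun y : ℝ => Real.exp (-(2 * s ^ 2)⁻¹ * y ^ 2)) volume :=
      integrable_exp_neg_mul_sq hb
    have h1 : Integrable (fun y : ℝ => Real.exp (-(2 * s ^ 2)⁻¹ * (y - m') ^ 2)) volume :=
      h0.comp_sub_right m'
    have h2 := (h1.const_mul ((Real.sqrt (2 * Real.pi) * s)⁻¹)).integrableOn
      (s := Set.Ioi c)
    refine h2.congr_fun (fun y _ => ?_) measurableSet_Ioi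
    congr 1
    rw [div_pow]
    have hs' : s ≠ 0 := hs.ne'
    field_simp
  have hint1 : IntegrableOn (fun y => pdf y) (Set.Ioi c) volume := gauss_int m
  have hint2 : IntegrableOn (fun y => Real.exp y * pdf y) (Set.Ioi c) volume := by
    have h3 : IntegrableOn (fun y => Real.exp (m + s ^ 2 / 2)
        * ((Real.sqrt (2 * Real.pi) * s)⁻¹ * Real.exp (-((y - (m + s ^ 2)) / s) ^ 2 / 2)))
        (Set.Ioi c) volume := (gauss_int (m + s ^ 2)).const_mul (Real.exp (m + s ^ 2 / 2))
    refine h3.congr_fun (fun y _ => (hshift y).symm) measurableSet_Ioi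
  -- split the integral
  have hsplit : (∫ y in Set.Ioi c, (Real.exp y - K') * pdf y)
      = (∫ y in Set.Ioi c, Real.exp y * pdf y) - ∫ y in Set.Ioi c, K' * pdf y := by
    rw [← integral_sub hint2 (hint1.const_mul K')]
    congr 1; ext y; ring
  rw [hsplit]
  have hI1 : (∫ y in Set.Ioi c, Real.exp y * pdf y)
      = Real.exp (m + s ^ 2 / 2) * stdNormalCdf ((m + s ^ 2 - c) / s) := by
    simp_rw [hshift]
    rw [integral_const_mul, gauss_tail s (m + s ^ 2) c hs]
  have hI2 : (∫ y in Set.Ioi c, K' * pdf y) = K' * stdNormalCdf ((m - c) / s) := by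
    rw [integral_const_mul, hpdf_def, gauss_tail s m c hs]
  rw [hI1, hI2, hE]
  have harg1 : (m + s ^ 2 - c) / s
      = (Real.log (K / K') + (μ + σ ^ 2) * t) / (σ * Real.sqrt t) := by
    rw [Real.log_div hK.ne' hK'.ne', hm_def, hc_def, hs2, hs_def]
    ring_nf
  have harg2 : (m - c) / s = (Real.log (K / K') + μ * t) / (σ * Real.sqrt t) := by
    rw [Real.log_div hK.ne' hK'.ne', hm_def, hc_def, hs_def]
    ring_nf
  rw [harg1, harg2]
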